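/- Let Λ : M_n(ℂ) → M_m(ℂ) be a linear Hermiticity-preserving map that is n-positive, i.e. (1_k ⊗ Λ) maps positive semidefinite matrices to positive semidefinite matrices for k = n. Then Λ is completely positive: for every k ≥ 1, the map 1_k ⊗ Λ, acting on matrices indexed by Fin k × Fin n by applying Λ to each n×n block, maps positive semidefinite matrices to positive semidefinite matrices. -/

import Mathlib

open Matrix BigOperators
open scoped ComplexOrder

/-- The `n × n` matrix `M_ψ` associated to a vector `ψ ∈ ℂ^α ⊗ ℂ^β`,
with entries `(M_ψ)_{ij} = ⟨e_i ⊗ e_j, ψ⟩ = ψ (i, j)`. -/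
def matOfVec {α β : Type*} (ψ : α × β → ℂ) : Matrix α β ℂ :=
  Matrix.of fun i j => ψ (i, j)

/-- The Schmidt rank of a bipartite vector is the rank of its associated matrix. -/
noncomputable def schmidtRank {α β : Type*} [Fintype β] (ψ : α × β → ℂ) : ℕ :=
  (matOfVec ψ).rank

/-- `ψ` is a unit vector. -/
def IsUnitVec {γ : Type*} [Fintype γ] (ψ : γ → ℂ) : Prop :=
  ∑ x, Complex.normSq (ψ x) = 1

/-- The outer product `|ψ⟩⟨ψ|`. -/
def outer {γ : Type*} (ψ : γ → ℂ) : Matrix γ γ ℂ :=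
  Matrix.of fun x y => ψ x * star (ψ y)

/-- `ρ ∈ S_k`: `ρ` admits a decomposition `ρ = ∑ i, p i • |ψ i⟩⟨ψ i|` with `p i ≥ 0`,
`∑ i, p i = 1`, each `ψ i` a unit vector of Schmidt rank at most `k`. -/
def InSchmidtClass {α : Type*} [Fintype α] (k : ℕ)
    (ρ : Matrix (α × α) (α × α) ℂ) : Prop :=
  ∃ (m : ℕ) (p : Fin m → ℝ) (ψ : Fin m → α × α → ℂ),
    (∀ i, 0 ≤ p i) ∧ (∑ i, p i) = 1 ∧
    (∀ i, IsUnitVec (ψ i)) ∧ (∀ i, schmidtRank (ψ i) ≤ k) ∧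
    ρ = ∑ i, (p i : ℂ) • outer (ψ i)

/-- The map `1 ⊗ Λ`, applying `Λ` to each block of a matrix indexed by `γ × Fin n`. -/
def blockMap {γ : Type*} {n m : ℕ}
    (Λ : Matrix (Fin n) (Fin n) ℂ → Matrix (Fin m) (Fin m) ℂ)
    (X : Matrix (γ × Fin n) (γ × Fin n) ℂ) : Matrix (γ × Fin m) (γ × Fin m) ℂ :=
  Matrix.of fun a b => Λ (Matrix.of fun s t => X (a.1, s) (b.1, t)) a.2 b.2

/-- `Λ` is Hermiticity-preserving: `Λ(X†) = Λ(X)†`. -/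
def HermPreserving {n m : ℕ}
    (Λ : Matrix (Fin n) (Fin n) ℂ → Matrix (Fin m) (Fin m) ℂ) : Prop :=
  ∀ X, Λ Xᴴ = (Λ X)ᴴ

/-- `Λ` is `k`-positive: `(1 ⊗ Λ)(|ψ⟩⟨ψ|)` is positive semidefinite for every
unit vector `ψ ∈ ℂ^N ⊗ ℂ^N` of Schmidt rank at most `k`. -/
def kPositive {N : ℕ} (k : ℕ)
    (Λ : Matrix (Fin N) (Fin N) ℂ → Matrix (Fin N) (Fin N) ℂ) : Prop :=
  ∀ ψ : Fin N × Fin N → ℂ, IsUnitVec ψ → schmidtRank ψ ≤ k →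
    (blockMap Λ (outer ψ)).PosSemidef

/-- If a Hermiticity-preserving linear map `Λ : M_n(ℂ) → M_m(ℂ)` is
`n`-positive, then it is completely positive: for every `k ≥ 1`, the map `1_k ⊗ Λ` maps
positive semidefinite matrices to positive semidefinite matrices. -/
lemma outer_posSemidef {γ : Type*} [Fintype γ] (v : γ → ℂ) :
    (outer v).PosSemidef := by
  have : outer v = Matrix.replicateCol Unit v * (Matrix.replicateCol Unit v)ᴴ := by
    ext p q
    simp [outer, Matrix.mul_apply, Matrix.replicateCol, Matrix.conjTranspose_apply]
  rw [this]
  exact posSemidef_self_mul_conjTranspose _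

lemma blockMap_sum {γ ι : Type*} {n m : ℕ}
    (Λ : Matrix (Fin n) (Fin n) ℂ →ₗ[ℂ] Matrix (Fin m) (Fin m) ℂ)
    (s : Finset ι) (f : ι → Matrix (γ × Fin n) (γ × Fin n) ℂ) :
    blockMap (γ := γ) (⇑Λ) (∑ i ∈ s, f i) = ∑ i ∈ s, blockMap (γ := γ) (⇑Λ) (f i) := by
  ext a b
  have h1 : (Matrix.of fun u t => (∑ i ∈ s, f i) (a.1, u) (b.1, t))
      = ∑ i ∈ s, Matrix.of fun u t => (f i) (a.1, u) (b.1, t) := by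
    ext u t
    simp [Matrix.sum_apply]
  simp only [blockMap, Matrix.of_apply]
  rw [h1, map_sum, Matrix.sum_apply, Matrix.sum_apply]
  rfl

lemma blockMap_outer_posSemidef {n m k : ℕ}
    (Λ : Matrix (Fin n) (Fin n) ℂ →ₗ[ℂ] Matrix (Fin m) (Fin m) ℂ)
    (hnpos : ∀ X : Matrix (Fin n × Fin n) (Fin n × Fin n) ℂ, X.PosSemidef →
      (blockMap (γ := Fin n) (⇑Λ) X).PosSemidef)
    (v : Fin k × Fin n → ℂ) :
    (blockMap (γ := Fin k) (⇑Λ) (outer v)).PosSemidef := by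
  set φ : Fin n × Fin n → ℂ := fun p => if p.1 = p.2 then 1 else 0 with hφ
  set C := blockMap (γ := Fin n) (⇑Λ) (outer φ) with hC
  have hCpos : C.PosSemidef := hnpos _ (outer_posSemidef φ)
  set M : Matrix (Fin k × Fin m) (Fin n × Fin m) ℂ :=
    Matrix.of fun p q => v (p.1, q.1) * (if p.2 = q.2 then 1 else 0) with hM
  have hCentry : ∀ (a b : Fin n) (u w : Fin m),
      C (a, u) (b, w) = Λ (single a b 1) u w := by
    intro a b u w
    have h2 : (Matrix.of fun c d => (outer φ) (a, c) (b, d)) = single a b (1 : ℂ) := by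
      ext c d
      by_cases h1 : a = c <;> by_cases h2 : b = d <;>
        simp [outer, hφ, single, h1, h2]
    simp [hC, blockMap, h2]
  have key : blockMap (γ := Fin k) (⇑Λ) (outer v) = M * C * Mᴴ := by
    ext ⟨i, s⟩ ⟨j, t⟩
    have hmat : (Matrix.of fun c d => v (i, c) * star (v (j, d)))
        = ∑ a : Fin n, ∑ b : Fin n,
            (v (i, a) * star (v (j, b))) • single a b (1 : ℂ) := by
      conv_lhs => rw [matrix_eq_sum_single (Matrix.of fun c d => v (i, c) * star (v (j, d)))]
      refine Finset.sum_congr rfl fun a _ => Finset.sum_congr rfl fun b _ => ?_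
      rw [smul_single, smul_eq_mul, mul_one]
      rfl
    have lhs_eq : blockMap (γ := Fin k) (⇑Λ) (outer v) (i, s) (j, t)
        = ∑ a : Fin n, ∑ b : Fin n,
            v (i, a) * star (v (j, b)) * Λ (single a b 1) s t := by
      simp only [blockMap, Matrix.of_apply, outer]
      rw [hmat]
      simp [map_sum, Matrix.sum_apply, Matrix.smul_apply, smul_eq_mul]
      refine Finset.sum_congr rfl fun a _ => Finset.sum_congr rfl fun b _ => ?_
      rw [show single a b (v (i, a) * (starRingEnd ℂ) (v (j, b)))
            = (v (i, a) * (starRingEnd ℂ) (v (j, b))) • single a b (1 : ℂ) by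
          rw [smul_single, smul_eq_mul, mul_one],
        _root_.map_smul, Matrix.smul_apply, smul_eq_mul]
    have rhs_eq : (M * C * Mᴴ) (i, s) (j, t)
        = ∑ b : Fin n, ∑ a : Fin n,
            v (i, a) * star (v (j, b)) * Λ (single a b 1) s t := by
      simp only [Matrix.mul_apply, Matrix.conjTranspose_apply, hM, Matrix.of_apply,
        Fintype.sum_prod_type]
      simp only [mul_ite, ite_mul, mul_one, mul_zero, zero_mul, star_mul',
        apply_ite (star : ℂ → ℂ), star_one, star_zero, Finset.sum_ite_eq,
        Finset.mem_univ, if_true]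
      refine Finset.sum_congr rfl fun b _ => ?_
      rw [Finset.sum_mul]
      refine Finset.sum_congr rfl fun a _ => ?_
      rw [hCentry]
      ring
    rw [lhs_eq, rhs_eq, Finset.sum_comm]
  rw [key]
  exact hCpos.mul_mul_conjTranspose_same M

theorem completelyPositive_of_n_positive {n m : ℕ}
    (Λ : Matrix (Fin n) (Fin n) ℂ →ₗ[ℂ] Matrix (Fin m) (Fin m) ℂ)
    (hherm : ∀ X, Λ Xᴴ = (Λ X)ᴴ)
    (hnpos : ∀ X : Matrix (Fin n × Fin n) (Fin n × Fin n) ℂ, X.PosSemidef →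
      (blockMap (γ := Fin n) (⇑Λ) X).PosSemidef) :
    ∀ k : ℕ, 1 ≤ k → ∀ X : Matrix (Fin k × Fin n) (Fin k × Fin n) ℂ, X.PosSemidef →
      (blockMap (γ := Fin k) (⇑Λ) X).PosSemidef := by
  intro k _hk X hX
  obtain ⟨B, hB⟩ : ∃ B : Matrix (Fin k × Fin n) (Fin k × Fin n) ℂ, X = Bᴴ * B := by
    open scoped MatrixOrder Matrix.Norms.L2Operator in
    exact CStarAlgebra.nonneg_iff_eq_star_mul_self.mp hX.nonneg
  set v : (Fin k × Fin n) → (Fin k × Fin n) → ℂ := fun a p => star (B a p) with hv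
  have hXdec : X = ∑ a : Fin k × Fin n, outer (v a) := by
    rw [hB]
    ext p q
    simp [Matrix.mul_apply, Matrix.sum_apply, outer, Matrix.conjTranspose_apply, hv]
  rw [hXdec, blockMap_sum]
  refine Finset.sum_induction _ _ (fun A B hA hB => hA.add hB) ?_
    (fun a _ => blockMap_outer_posSemidef Λ hnpos (v a))
  exact Matrix.PosSemidef.zero
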